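/- (Proposition 2, blow-up at an inner MOTS.) Let ℓ₀ ∈ ℝ and let R, K_ℓ, K_R : [ℓ₀,∞) → ℝ be smooth with R > 0; set H = 2R'/R, θ⁺ = 2K_R + H, θ⁻ = 2K_R − H, trK = K_ℓ + 2K_R. Assume the decay conditions |R²/ℓ² − 1| = O(ℓ⁻¹), |H − 2/ℓ| = O(ℓ⁻²), |∂_ℓ H + 2/ℓ²| = O(ℓ⁻³), |K_ℓ|, |K_R| = O(ℓ⁻²), |∂_ℓ K_ℓ|, |∂_ℓ K_R| = O(ℓ⁻³), |trK| = O(ℓ⁻³), and that either θ⁻(ℓ) < 0 for all ℓ or trK(ℓ) < 0 for all ℓ. Suppose ℓ* is an outermost, finitely stable MOTS (θ⁺(ℓ*) = 0, θ⁺ > 0 on (ℓ*,∞), ∂_ℓ^m θ⁺(ℓ*) > 0 for some m ≥ 1), and suppose ℓ** with ℓ₀ ≤ ℓ** < ℓ* is another finitely stable MOTS with θ⁺(ℓ) > 0 for all ℓ ∈ (ℓ**, ℓ*). Then there exists a blow-up solution for ℓ**: a smooth solution k of ∂_ℓ k = −K_ℓ k² − H k + trK on [ℓ**,∞) with k(ℓ**)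 = −1, |k(ℓ)| < 1 for all ℓ > ℓ**, and k(ℓ) → 0 as ℓ → ∞. -/

import Mathlib

open Filter Asymptotics Set Topology
open scoped ContDiff

/-- Mean curvature `H = 2 R' / R` of the spherically symmetric spheres. -/
noncomputable def Hf (R : ℝ → ℝ) : ℝ → ℝ := fun ℓ => 2 * deriv R ℓ / R ℓ

/-- `trK = K_ℓ + 2 K_R`. -/
def trKf (Kl KR : ℝ → ℝ) : ℝ → ℝ := fun ℓ => Kl ℓ + 2 * KR ℓ

/-- Outer expansion `θ⁺ = 2 K_R + H`. -/
noncomputable def thetaPlus (R KR : ℝ → ℝ) : ℝ → ℝ := fun ℓ => 2 * KR ℓ + Hf R ℓ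

/-- Inner expansion `θ⁻ = 2 K_R − H`. -/
noncomputable def thetaMinus (R KR : ℝ → ℝ) : ℝ → ℝ := fun ℓ => 2 * KR ℓ - Hf R ℓ

/-- The asymptotic flatness decay conditions (2.8)-(2.13) of the paper:
`|R²/ℓ² − 1| = O(ℓ⁻¹)`, `|H − 2/ℓ| = O(ℓ⁻²)`, `|∂_ℓ H + 2/ℓ²| = O(ℓ⁻³)`,
`|K_ℓ|, |K_R| = O(ℓ⁻²)`, `|∂_ℓ K_ℓ|, |∂_ℓ K_R| = O(ℓ⁻³)`, `|trK| = O(ℓ⁻³)`. -/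
def JangDecay (R Kl KR : ℝ → ℝ) : Prop :=
  (fun ℓ => R ℓ ^ 2 / ℓ ^ 2 - 1) =O[Filter.atTop] (fun ℓ : ℝ => ℓ⁻¹) ∧
  (fun ℓ => Hf R ℓ - 2 / ℓ) =O[Filter.atTop] (fun ℓ : ℝ => (ℓ ^ 2)⁻¹) ∧
  (fun ℓ => deriv (Hf R) ℓ + 2 / ℓ ^ 2) =O[Filter.atTop] (fun ℓ : ℝ => (ℓ ^ 3)⁻¹) ∧
  Kl =O[Filter.atTop] (fun ℓ : ℝ => (ℓ ^ 2)⁻¹) ∧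
  KR =O[Filter.atTop] (fun ℓ : ℝ => (ℓ ^ 2)⁻¹) ∧
  deriv Kl =O[Filter.atTop] (fun ℓ : ℝ => (ℓ ^ 3)⁻¹) ∧
  deriv KR =O[Filter.atTop] (fun ℓ : ℝ => (ℓ ^ 3)⁻¹) ∧
  trKf Kl KR =O[Filter.atTop] (fun ℓ : ℝ => (ℓ ^ 3)⁻¹)

/-- A blow-up solution for the surface `ℓ*`: a smooth solution `k` of the reduced
Jang equation `∂_ℓ k = −K_ℓ k² − H k + trK` on `[ℓ*,∞)` with `k(ℓ*) = −1`,
`|k(ℓ)| < 1` for all `ℓ > ℓ*`, and `k(ℓ) → 0` as `ℓ → ∞`. -/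
def IsBlowupSolution (R Kl KR : ℝ → ℝ) (ℓs : ℝ) (k : ℝ → ℝ) : Prop :=
  ContDiffOn ℝ (⊤ : ℕ∞) k (Set.Ici ℓs) ∧
  (∀ ℓ ∈ Set.Ici ℓs,
    HasDerivAt k (-(Kl ℓ) * k ℓ ^ 2 - Hf R ℓ * k ℓ + trKf Kl KR ℓ) ℓ) ∧
  k ℓs = -1 ∧
  (∀ ℓ, ℓs < ℓ → |k ℓ| < 1) ∧
  Filter.Tendsto k Filter.atTop (nhds 0)


namespace JangAux

/-- clamp to `[-1,1]` -/
noncomputable def cl (x : ℝ) : ℝ := max (-1) (min x 1)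

lemma cl_mem (x : ℝ) : cl x ∈ Icc (-1:ℝ) 1 :=
  ⟨le_max_left _ _, max_le (by norm_num) (min_le_right _ _)⟩

lemma cl_eq {x : ℝ} (h1 : -1 ≤ x) (h2 : x ≤ 1) : cl x = x := by
  unfold cl; rw [min_eq_left h2, max_eq_right h1]

lemma cl_lip (x y : ℝ) : |cl x - cl y| ≤ |x - y| := by
  unfold cl
  calc |max (-1) (min x 1) - max (-1) (min y 1)|
      = |max (min x 1) (-1) - max (min y 1) (-1)| := by rw [max_comm, max_comm (min y 1)]
    _ ≤ |min x 1 - min y 1| := abs_max_sub_max_le_abs _ _ _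
    _ ≤ max |x - y| |(1:ℝ) - 1| := abs_min_sub_min_le_max _ _ _ _
    _ = |x - y| := by simp

/-- Global existence for an ODE whose right-hand side is globally Lipschitz and
bounded in the space variable on every compact time interval. -/
lemma exists_global_sol (G : ℝ → ℝ → ℝ) (a x₀ : ℝ)
    (hcont : ∀ x : ℝ, ContinuousOn (fun t => G t x) (Ici a))
    (hlip : ∀ b : ℝ, ∃ L : NNReal, ∀ t ∈ Icc a b, LipschitzWith L (G t))
    (hbdd : ∀ b : ℝ, ∃ C : ℝ, 0 ≤ C ∧ ∀ t ∈ Icc a b, ∀ x : ℝ, |G t x| ≤ C) :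
    ∃ k : ℝ → ℝ, (∀ t, t ≤ a → k t = x₀) ∧
      HasDerivWithinAt k (G a x₀) (Ici a) a ∧
      (∀ t, a < t → HasDerivAt k (G t (k t)) t) := by
  have hsol : ∀ n : ℕ, ∃ f : ℝ → ℝ, f a = x₀ ∧
      ∀ t ∈ Icc a (a + n + 1), HasDerivWithinAt f (G t (f t)) (Icc a (a + n + 1)) t := by
    intro n
    obtain ⟨L, hL⟩ := hlip (a + n + 1)
    obtain ⟨C, hC0, hC⟩ := hbdd (a + n + 1)
    have hn1 : (0:ℝ) ≤ (n:ℝ) + 1 := by positivity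
    have hab : a ≤ a + n + 1 := by linarith
    have hpl : IsPicardLindelof G (tmin := a) (tmax := a + n + 1) ⟨a, le_rfl, hab⟩ x₀
        ⟨C * ((n:ℝ) + 1) + 1, by positivity⟩ 0 ⟨C, hC0⟩ L := by
      constructor
      · exact fun t ht => (hL t ht).lipschitzOnWith
      · exact fun x _ => (hcont x).mono (Icc_subset_Ici_self)
      · intro t ht x _
        rw [Real.norm_eq_abs]; exact hC t ht x
      · have : max (a + n + 1 - a) (a - a) = (n:ℝ) + 1 := by
          rw [max_eq_left (by linarith)]; ring
        rw [this]
        simp only [NNReal.coe_zero, sub_zero]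
        change C * ((n:ℝ) + 1) ≤ C * ((n:ℝ) + 1) + 1
        nlinarith
    exact hpl.exists_eq_forall_mem_Icc_hasDerivWithinAt₀
  choose y hy1 hy2 using hsol
  -- compatibility of the family of solutions
  have key : ∀ m n : ℕ, m ≤ n → ∀ t ∈ Icc a (a + m + 1), y m t = y n t := by
    intro m n hmn t ht
    obtain ⟨L, hL⟩ := hlip (a + n + 1)
    have hbm : a + m + 1 ≤ a + n + 1 := by
      have : (m:ℝ) ≤ n := Nat.cast_le.mpr hmn
      linarith
    set v : ℝ → ℝ → ℝ := fun s => G (min (max s a) (a + m + 1)) with hv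
    have hmem : ∀ s : ℝ, min (max s a) (a + m + 1) ∈ Icc a (a + n + 1) := by
      intro s
      constructor
      · exact le_min (le_max_right _ _) (by linarith)
      · exact le_trans (min_le_right _ _) hbm
    have huniq : EqOn (y m) (y n) (Icc a (a + m + 1)) := by
      apply ODE_solution_unique (v := v) (K := L)
        (fun s => hL _ (hmem s))
      · exact fun s hs => (hy2 m s hs).continuousWithinAt
      · intro s hs
        have h1 : v s (y m s) = G s (y m s) := by
          simp only [hv]
          rw [max_eq_left hs.1, min_eq_left hs.2.le]
        rw [h1]
        exact (hy2 m s (Ico_subset_Icc_self hs)).mono_of_mem_nhdsWithin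
          (Icc_mem_nhdsGE_of_mem hs)
      · exact fun s hs => ((hy2 n s (Icc_subset_Icc_right hbm hs)).mono
          (Icc_subset_Icc_right hbm)).continuousWithinAt
      · intro s hs
        have h1 : v s (y n s) = G s (y n s) := by
          simp only [hv]
          rw [max_eq_left hs.1, min_eq_left hs.2.le]
        rw [h1]
        exact (hy2 n s (Icc_subset_Icc_right hbm (Ico_subset_Icc_self hs))).mono_of_mem_nhdsWithin
          (Icc_mem_nhdsGE_of_mem ⟨hs.1, lt_of_lt_of_le hs.2 hbm⟩)
      · rw [hy1, hy1]
    exact huniq ht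
  have key' : ∀ m n : ℕ, ∀ t, t ∈ Icc a (a + m + 1) → t ∈ Icc a (a + n + 1) → y m t = y n t := by
    intro m n t h1 h2
    rcases le_total m n with h | h
    · exact key m n h t h1
    · exact (key n m h t h2).symm
  set k : ℝ → ℝ := fun t => if t ≤ a then x₀ else y ⌈t - a⌉₊ t with hkdef
  have hmemc : ∀ t : ℝ, a ≤ t → t ∈ Icc a (a + ⌈t - a⌉₊ + 1) := by
    intro t ht
    refine ⟨ht, ?_⟩
    have := Nat.le_ceil (t - a)
    linarith [this]
  have hk_eq : ∀ n : ℕ, ∀ t ∈ Icc a (a + n + 1), k t = y n t := by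
    intro n t ht
    by_cases h : t ≤ a
    · have hta : t = a := le_antisymm h ht.1
      simp only [hkdef, if_pos h, hta, hy1]
      simp
    · simp only [hkdef, if_neg h]
      exact key' _ n t (hmemc t (not_le.mp h).le) ht
  have hka : k a = x₀ := by simp [hkdef]
  refine ⟨k, fun t ht => by simp [hkdef, ht], ?_, ?_⟩
  · -- derivative at a within Ici a
    have h01 : a ∈ Icc a (a + (0:ℕ) + 1) := ⟨le_rfl, by norm_num⟩
    have h0 := hy2 0 a h01
    rw [hy1] at h0
    have hmem : Icc a (a + (0:ℕ) + 1) ∈ 𝓝[≥] a :=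
      Icc_mem_nhdsGE_of_mem ⟨le_rfl, by norm_num⟩
    have h1 : HasDerivWithinAt (y 0) (G a x₀) (Ici a) a := h0.mono_of_mem_nhdsWithin hmem
    apply h1.congr_of_eventuallyEq ?_ (by rw [hka, hy1])
    filter_upwards [hmem] with t ht using hk_eq 0 t ht
  · intro t ht
    set n := ⌈t - a⌉₊ with hn
    have htn : t < a + n + 1 := by
      have := Nat.le_ceil (t - a)
      rw [← hn] at this
      linarith
    have hin : t ∈ Icc a (a + n + 1) := ⟨ht.le, htn.le⟩
    have hd := (hy2 n t hin).hasDerivAt (Icc_mem_nhds (by linarith) htn)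
    have heq : k =ᶠ[𝓝 t] y n := by
      filter_upwards [Ioo_mem_nhds ht htn] with s hs using hk_eq n s ⟨hs.1.le, hs.2.le⟩
    have := hd.congr_of_eventuallyEq heq
    rwa [← hk_eq n t hin] at this



lemma cl_of_le {x : ℝ} (h : x ≤ -1) : cl x = -1 := by
  unfold cl
  rw [min_eq_left (by linarith), max_eq_left (by linarith)]

lemma cl_of_ge {x : ℝ} (h : 1 ≤ x) : cl x = 1 := by
  unfold cl
  rw [min_eq_right h, max_eq_right (by norm_num)]



/-- Barrier lemma: if the derivative is nonnegative whenever the solution is `≤ -1`,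
the solution stays `≥ -1`. -/
lemma stay_above (a : ℝ) (k d : ℝ → ℝ)
    (hkc : ContinuousOn k (Ici a))
    (hd : ∀ t, a < t → HasDerivAt k (d t) t)
    (hpos : ∀ t, a ≤ t → k t ≤ -1 → 0 ≤ d t)
    (ha : -1 ≤ k a) : ∀ t, a ≤ t → -1 ≤ k t := by
  intro t₁ ht₁
  by_contra hlt
  push_neg at hlt
  set S := {t | t ∈ Icc a t₁ ∧ -1 ≤ k t} with hS
  have hSsub : S ⊆ Ici a := fun x hx => hx.1.1
  have hne : S.Nonempty := ⟨a, ⟨le_rfl, ht₁⟩, ha⟩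
  have hbdd : BddAbove S := ⟨t₁, fun x hx => hx.1.2⟩
  set s := sSup S with hs
  have hsa : a ≤ s := le_csSup hbdd ⟨⟨le_rfl, ht₁⟩, ha⟩
  have hst : s ≤ t₁ := csSup_le hne (fun x hx => hx.1.2)
  have hclos : s ∈ closure S := csSup_mem_closure hne hbdd
  haveI : (𝓝[S] s).NeBot := mem_closure_iff_nhdsWithin_neBot.mp hclos
  have hkS : -1 ≤ k s := by
    exact ge_of_tendsto ((hkc s hsa).mono hSsub)
      (eventually_nhdsWithin_of_forall (fun x hx => hx.2))
  have hst₁ : s < t₁ := lt_of_le_of_ne hst (by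
    intro h; rw [h] at hkS; linarith)
  have hlt2 : ∀ t ∈ Ioc s t₁, k t < -1 := by
    intro t ht
    by_contra hge
    push_neg at hge
    have : t ≤ s := le_csSup hbdd ⟨⟨hsa.trans ht.1.le, ht.2⟩, hge⟩
    exact absurd ht.1 (not_lt.mpr this)
  have hks : k s = -1 := by
    refine le_antisymm ?_ hkS
    have hcl : s ∈ closure (Ioc s t₁) := by
      rw [closure_Ioc hst₁.ne]; exact ⟨le_rfl, hst⟩
    haveI : (𝓝[Ioc s t₁] s).NeBot := mem_closure_iff_nhdsWithin_neBot.mp hcl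
    exact le_of_tendsto ((hkc s hsa).mono (fun x hx => hsa.trans hx.1.le))
      (eventually_nhdsWithin_of_forall (fun x hx => (hlt2 x hx).le))
  have hmono : MonotoneOn k (Icc s t₁) := by
    refine monotoneOn_of_deriv_nonneg (convex_Icc s t₁)
      (hkc.mono (fun x hx => hsa.trans hx.1)) ?_ ?_
    · intro t ht
      rw [interior_Icc] at ht
      exact (hd t (lt_of_le_of_lt hsa ht.1)).differentiableAt.differentiableWithinAt
    · intro t ht
      rw [interior_Icc] at ht
      rw [(hd t (lt_of_le_of_lt hsa ht.1)).deriv]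
      exact hpos t (hsa.trans ht.1.le) (hlt2 t ⟨ht.1, ht.2.le⟩).le
  have := hmono (left_mem_Icc.mpr hst₁.le) (right_mem_Icc.mpr hst₁.le) hst₁.le
  rw [hks] at this
  linarith

/-- Barrier lemma: if the derivative is negative whenever the solution vanishes,
a solution starting negative stays negative. -/
lemma stay_neg (a : ℝ) (k d : ℝ → ℝ)
    (hkc : ContinuousOn k (Ici a))
    (hd : ∀ t, a < t → HasDerivAt k (d t) t)
    (hneg : ∀ t, a ≤ t → k t = 0 → d t < 0)
    (ha : k a < 0) : ∀ t, a ≤ t → k t < 0 := by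
  intro t₁ ht₁
  by_contra hge
  push_neg at hge
  set S := {t | t ∈ Icc a t₁ ∧ 0 ≤ k t} with hS
  have hSsub : S ⊆ Ici a := fun x hx => hx.1.1
  have hne : S.Nonempty := ⟨t₁, ⟨ht₁, le_rfl⟩, hge⟩
  have hbdd : BddBelow S := ⟨a, fun x hx => hx.1.1⟩
  set s := sInf S with hs
  have hsa : a ≤ s := le_csInf hne (fun x hx => hx.1.1)
  have hst : s ≤ t₁ := csInf_le hbdd ⟨⟨ht₁, le_rfl⟩, hge⟩
  have hclos : s ∈ closure S := csInf_mem_closure hne hbdd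
  haveI : (𝓝[S] s).NeBot := mem_closure_iff_nhdsWithin_neBot.mp hclos
  have hkS : 0 ≤ k s := by
    exact ge_of_tendsto ((hkc s hsa).mono hSsub)
      (eventually_nhdsWithin_of_forall (fun x hx => hx.2))
  have has : a < s := lt_of_le_of_ne hsa (by
    intro h; rw [← h] at hkS; linarith)
  have hlt2 : ∀ t ∈ Ico a s, k t < 0 := by
    intro t ht
    by_contra hge2
    push_neg at hge2
    have : s ≤ t := csInf_le hbdd ⟨⟨ht.1, ht.2.le.trans hst⟩, hge2⟩
    exact absurd ht.2 (not_lt.mpr this)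
  have hks : k s = 0 := by
    refine le_antisymm ?_ hkS
    have hcl : s ∈ closure (Ico a s) := by
      rw [closure_Ico has.ne]; exact ⟨hsa, le_rfl⟩
    haveI : (𝓝[Ico a s] s).NeBot := mem_closure_iff_nhdsWithin_neBot.mp hcl
    exact le_of_tendsto ((hkc s hsa).mono (fun x hx => hx.1))
      (eventually_nhdsWithin_of_forall (fun x hx => (hlt2 x hx).le))
  have hds : d s < 0 := hneg s hsa hks
  have hslope := hasDerivAt_iff_tendsto_slope.mp (hd s has)
  have hev : ∀ᶠ x in 𝓝[≠] s, slope k s x < 0 := hslope.eventually_lt_const hds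
  have hev2 : ∀ᶠ x in 𝓝[<] s, slope k s x < 0 :=
    hev.filter_mono (nhdsWithin_mono s (fun x hx => ne_of_lt hx))
  have hmem : Ioo a s ∈ 𝓝[<] s := Ioo_mem_nhdsLT_of_mem ⟨has, le_rfl⟩
  haveI : (𝓝[<] s).NeBot := nhdsLT_neBot s
  obtain ⟨x, hx1, hx2⟩ := (hev2.and (eventually_of_mem hmem (fun x hx => hx))).exists
  have hxs : x - s < 0 := sub_neg.mpr hx2.2
  have : slope k s x = k x / (x - s) := by
    rw [slope_def_field, hks]; ring_nf
  rw [this] at hx1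
  have hkx : 0 < k x := by
    rcases div_neg_iff.mp hx1 with ⟨h1, h2⟩ | ⟨h1, h2⟩
    · linarith
    · linarith
  exact absurd hkx (not_lt.mpr (hlt2 x ⟨hx2.1.le, hx2.2⟩).le)

/-- Grönwall-type positivity: if `g' = p + q g` with `p ≥ 0` and `g a ≥ 0`, then `g ≥ 0`;
moreover `g t > 0` if `g a > 0` or `p` is positive somewhere in `(a, t)`. -/
lemma gronwall_pos (a : ℝ) (g p q : ℝ → ℝ)
    (hgc : ContinuousOn g (Ici a))
    (hq : Continuous q)
    (hg' : ∀ t, a < t → HasDerivAt g (p t + q t * g t) t)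
    (hp : ∀ t, a < t → 0 ≤ p t)
    (ha : 0 ≤ g a) :
    (∀ t, a ≤ t → 0 ≤ g t) ∧
    (∀ t, a < t → (0 < g a ∨ ∃ c, a < c ∧ c < t ∧ 0 < p c) → 0 < g t) := by
  set A : ℝ → ℝ := fun t => ∫ s in a..t, q s with hA
  have hA' : ∀ t, HasDerivAt A (q t) t := fun t =>
    intervalIntegral.integral_hasDerivAt_right (hq.intervalIntegrable a t)
      (hq.stronglyMeasurableAtFilter _ _) hq.continuousAt
  have hAc : Continuous A := by
    rw [continuous_iff_continuousAt]; exact fun t => (hA' t).continuousAt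
  set φ : ℝ → ℝ := fun t => g t * Real.exp (-A t) with hφ
  have hφ' : ∀ t, a < t → HasDerivAt φ (p t * Real.exp (-A t)) t := by
    intro t ht
    have h1 : HasDerivAt (fun u => Real.exp (-(A u))) (Real.exp (-(A t)) * -q t) t :=
      (hA' t).neg.exp
    have h2 := (hg' t ht).mul h1
    convert h2 using 1 <;> first | rfl | ring
  have hφc : ContinuousOn φ (Ici a) := hgc.mul (hAc.neg.rexp).continuousOn
  have hφa : φ a = g a := by
    simp only [hφ, hA, intervalIntegral.integral_same, neg_zero, Real.exp_zero, mul_one]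
  have hmono : ∀ T, a ≤ T → MonotoneOn φ (Icc a T) := by
    intro T hT
    refine monotoneOn_of_deriv_nonneg (convex_Icc a T) (hφc.mono Icc_subset_Ici_self) ?_ ?_
    · intro t ht
      rw [interior_Icc] at ht
      exact (hφ' t ht.1).differentiableAt.differentiableWithinAt
    · intro t ht
      rw [interior_Icc] at ht
      rw [(hφ' t ht.1).deriv]
      exact mul_nonneg (hp t ht.1) (Real.exp_pos _).le
  have hφnn : ∀ t, a ≤ t → g a * 1 ≤ φ t := by
    intro t ht
    have := hmono t ht (left_mem_Icc.mpr ht) (right_mem_Icc.mpr ht) ht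
    rw [hφa] at this
    linarith
  constructor
  · intro t ht
    have h1 := hφnn t ht
    simp only [hφ] at h1
    have h2 := Real.exp_pos (-A t)
    nlinarith
  · intro t ht hcase
    have hexp := Real.exp_pos (-A t)
    rcases hcase with hga | ⟨c, hc1, hc2, hc3⟩
    · have h1 := hφnn t ht.le
      simp only [hφ] at h1
      nlinarith
    · suffices h : 0 < φ t by
        have h' : 0 < g t * Real.exp (-A t) := h
        by_contra hng
        push_neg at hng
        nlinarith [mul_nonpos_of_nonpos_of_nonneg hng (Real.exp_pos (-A t)).le]
      rcases lt_or_ge 0 (φ t) with h | h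
      · exact h
      have hφt0 : φ t = 0 := le_antisymm h (by have := hφnn t ht.le; linarith)
      have hall : ∀ u ∈ Icc a t, φ u = 0 := by
        intro u hu
        have h1 : φ u ≤ φ t := hmono t ht.le hu (right_mem_Icc.mpr ht.le) hu.2
        have h2 := hφnn u hu.1
        rw [hφt0] at h1
        linarith
      have hder0 : HasDerivAt φ 0 c := by
        have heq : φ =ᶠ[𝓝 c] fun _ => 0 := by
          filter_upwards [Ioo_mem_nhds hc1 hc2] with u hu using hall u ⟨hu.1.le, hu.2.le⟩
        exact (hasDerivAt_const c 0).congr_of_eventuallyEq heq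
      have huniq : p c * Real.exp (-A c) = 0 := (hφ' c hc1).unique hder0
      have := Real.exp_pos (-A c)
      nlinarith

end JangAux

set_option maxHeartbeats 1000000 in
/-- Proposition 2: under the decay conditions and the sign condition, if `ℓ*` is an
outermost, finitely stable MOTS and `ℓ** < ℓ*` is another finitely stable MOTS which
is outermost in `[ℓ**, ℓ*)`, then a blow-up solution exists for `ℓ**`. -/
theorem blowup_exists_inner_mots (ℓ₀ : ℝ) (R Kl KR : ℝ → ℝ)
    (hR : ContDiff ℝ (⊤ : ℕ∞) R)
    (hKl : ContDiff ℝ (⊤ : ℕ∞) Kl)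
    (hKR : ContDiff ℝ (⊤ : ℕ∞) KR)
    (hRpos : ∀ ℓ ∈ Set.Ici ℓ₀, 0 < R ℓ)
    (hdecay : JangDecay R Kl KR)
    (hsign : (∀ ℓ ∈ Set.Ici ℓ₀, thetaMinus R KR ℓ < 0) ∨
             (∀ ℓ ∈ Set.Ici ℓ₀, trKf Kl KR ℓ < 0))
    (ℓs : ℝ) (hℓs : ℓ₀ ≤ ℓs)
    (hmots : thetaPlus R KR ℓs = 0)
    (houtermost : ∀ ℓ, ℓs < ℓ → 0 < thetaPlus R KR ℓ)
    (hstable : ∃ m, 1 ≤ m ∧ 0 < iteratedDeriv m (thetaPlus R KR) ℓs)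
    (ℓss : ℝ) (hℓss₀ : ℓ₀ ≤ ℓss) (hℓss : ℓss < ℓs)
    (hmots' : thetaPlus R KR ℓss = 0)
    (hbetween : ∀ ℓ ∈ Set.Ioo ℓss ℓs, 0 < thetaPlus R KR ℓ)
    (hstable' : ∃ m, 1 ≤ m ∧ 0 < iteratedDeriv m (thetaPlus R KR) ℓss) :
    ∃ k : ℝ → ℝ, IsBlowupSolution R Kl KR ℓss k := by
  obtain ⟨hO1, -, -, hO4, -, -, -, hO8⟩ := hdecay
  have hIci : Ici ℓss ⊆ Ici ℓ₀ := Ici_subset_Ici.mpr hℓss₀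
  have hRdiff : Differentiable ℝ R := (contDiff_infty_iff_deriv.mp hR).1
  have hRder : ContDiff ℝ ∞ (deriv R) := (contDiff_infty_iff_deriv.mp hR).2
  have hHc : ContinuousOn (Hf R) (Ici ℓ₀) := by
    apply ContinuousOn.div
    · exact (continuous_const.mul hRder.continuous).continuousOn
    · exact hR.continuous.continuousOn
    · exact fun x hx => (hRpos x hx).ne'
  have hθnn : ∀ t, ℓss ≤ t → 0 ≤ thetaPlus R KR t := by
    intro t ht
    rcases eq_or_lt_of_le ht with h | h
    · rw [← h, hmots']
    · rcases lt_trichotomy t ℓs with h2 | h2 | h2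
      · exact (hbetween t ⟨h, h2⟩).le
      · rw [h2, hmots]
      · exact (houtermost t h2).le
  set F : ℝ → ℝ → ℝ := fun t x => -(Kl t) * x ^ 2 - Hf R t * x + trKf Kl KR t with hF
  set G : ℝ → ℝ → ℝ := fun t x => F t (JangAux.cl x) with hG
  have hFm1 : ∀ t, F t (-1) = thetaPlus R KR t := by
    intro t; simp only [hF, thetaPlus, trKf]; ring
  have hF1 : ∀ t, F t 1 = thetaMinus R KR t := by
    intro t; simp only [hF, thetaMinus, trKf]; ring
  -- continuity of the field in time
  have hcont : ∀ x : ℝ, ContinuousOn (fun t => G t x) (Ici ℓss) := by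
    intro x
    simp only [hG, hF, trKf]
    refine ContinuousOn.add (ContinuousOn.sub ?_ ?_) ?_
    · exact (hKl.continuous.neg.mul continuous_const).continuousOn
    · exact ((hHc.mono hIci).mul continuousOn_const)
    · exact (hKl.continuous.add (continuous_const.mul hKR.continuous)).continuousOn
  -- Lipschitz bounds on compact time intervals
  have hlip : ∀ b : ℝ, ∃ L : NNReal, ∀ t ∈ Icc ℓss b, LipschitzWith L (G t) := by
    intro b
    obtain ⟨M, hM⟩ := (isCompact_Icc (a := ℓss) (b := b)).exists_bound_of_continuousOn
      (f := fun t => |Kl t| + |Hf R t|)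
      ((hKl.continuous.abs.continuousOn).add ((hHc.mono (fun x hx => hℓss₀.trans hx.1)).abs))
    refine ⟨Real.toNNReal (3 * M), fun t ht => ?_⟩
    have hMt := hM t ht
    rw [Real.norm_eq_abs, abs_of_nonneg (by positivity)] at hMt
    have hM0 : 0 ≤ M := le_trans (by positivity) hMt
    apply LipschitzWith.of_dist_le_mul
    intro x y
    rw [Real.dist_eq, Real.dist_eq, Real.coe_toNNReal _ (by linarith)]
    have h1 : G t x - G t y =
        (JangAux.cl x - JangAux.cl y) * (-(Kl t) * (JangAux.cl x + JangAux.cl y) - Hf R t) := by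
      simp only [hG, hF]; ring
    rw [h1, abs_mul]
    have hcx := JangAux.cl_mem x
    have hcy := JangAux.cl_mem y
    have hax : |JangAux.cl x| ≤ 1 := abs_le.mpr ⟨hcx.1, hcx.2⟩
    have hay : |JangAux.cl y| ≤ 1 := abs_le.mpr ⟨hcy.1, hcy.2⟩
    have h2 : |(-(Kl t) * (JangAux.cl x + JangAux.cl y) - Hf R t)| ≤ 3 * M := by
      calc |(-(Kl t) * (JangAux.cl x + JangAux.cl y) - Hf R t)|
          ≤ |(-(Kl t)) * (JangAux.cl x + JangAux.cl y)| + |Hf R t| := abs_sub _ _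
        _ = |Kl t| * |JangAux.cl x + JangAux.cl y| + |Hf R t| := by rw [abs_mul, abs_neg]
        _ ≤ |Kl t| * 2 + |Hf R t| := by
            have h3 : |JangAux.cl x + JangAux.cl y| ≤ 2 := (abs_add_le _ _).trans (by linarith)
            nlinarith [abs_nonneg (Kl t)]
        _ ≤ 3 * M := by nlinarith [abs_nonneg (Kl t), abs_nonneg (Hf R t)]
    calc |JangAux.cl x - JangAux.cl y| * |(-(Kl t) * (JangAux.cl x + JangAux.cl y) - Hf R t)|
        ≤ |x - y| * (3 * M) :=
          mul_le_mul (JangAux.cl_lip x y) h2 (abs_nonneg _) (abs_nonneg _)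
      _ = 3 * M * |x - y| := mul_comm _ _
  -- boundedness on compact time intervals
  have hbdd : ∀ b : ℝ, ∃ C : ℝ, 0 ≤ C ∧ ∀ t ∈ Icc ℓss b, ∀ x : ℝ, |G t x| ≤ C := by
    intro b
    obtain ⟨M, hM⟩ := (isCompact_Icc (a := ℓss) (b := b)).exists_bound_of_continuousOn
      (f := fun t => |Kl t| + |Hf R t| + |trKf Kl KR t|)
      (((hKl.continuous.abs.continuousOn).add
        ((hHc.mono (fun x hx => hℓss₀.trans hx.1)).abs)).add
        (by
          refine Continuous.continuousOn ?_
          simp only [trKf]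
          exact (hKl.continuous.add (continuous_const.mul hKR.continuous)).abs))
    refine ⟨max M 0, le_max_right _ _, fun t ht x => ?_⟩
    have hMt := hM t ht
    rw [Real.norm_eq_abs, abs_of_nonneg (by positivity)] at hMt
    have hcx := JangAux.cl_mem x
    have hax : |JangAux.cl x| ≤ 1 := abs_le.mpr ⟨hcx.1, hcx.2⟩
    have h2 : |G t x| ≤ |Kl t| + |Hf R t| + |trKf Kl KR t| := by
      simp only [hG, hF]
      calc |(-(Kl t) * JangAux.cl x ^ 2 - Hf R t * JangAux.cl x + trKf Kl KR t)|
          ≤ |(-(Kl t) * JangAux.cl x ^ 2 - Hf R t * JangAux.cl x)| + |trKf Kl KR t| :=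
            abs_add_le _ _
        _ ≤ (|(-(Kl t)) * JangAux.cl x ^ 2| + |Hf R t * JangAux.cl x|) + |trKf Kl KR t| := by
            have := abs_sub (-(Kl t) * JangAux.cl x ^ 2) (Hf R t * JangAux.cl x)
            linarith
        _ ≤ |Kl t| + |Hf R t| + |trKf Kl KR t| := by
            rw [abs_mul, abs_neg, abs_mul, abs_pow]
            have hsq : |JangAux.cl x| ^ 2 ≤ 1 := by
              nlinarith [abs_nonneg (JangAux.cl x)]
            have e1 : |Kl t| * |JangAux.cl x| ^ 2 ≤ |Kl t| :=
              mul_le_of_le_one_right (abs_nonneg _) hsq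
            have e2 : |Hf R t| * |JangAux.cl x| ≤ |Hf R t| :=
              mul_le_of_le_one_right (abs_nonneg _) hax
            linarith
    have h3 : |Kl t| + |Hf R t| + |trKf Kl KR t| ≤ M := hMt
    have h4 : M ≤ max M 0 := le_max_left _ _
    linarith
  obtain ⟨k, hk_left, hk_win, hk_gt⟩ := JangAux.exists_global_sol G ℓss (-1) hcont hlip hbdd
  have hka : k ℓss = -1 := hk_left ℓss le_rfl
  have hclm1 : JangAux.cl (-1 : ℝ) = -1 := JangAux.cl_eq le_rfl (by norm_num)
  have hGa0 : G ℓss (-1 : ℝ) = 0 := by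
    simp only [hG]
    rw [hclm1, hFm1, hmots']
  have hderivA : HasDerivAt k 0 ℓss := by
    have hleft : HasDerivWithinAt k 0 (Iic ℓss) ℓss :=
      (hasDerivWithinAt_const ℓss (Iic ℓss) (-1 : ℝ)).congr (fun y hy => hk_left y hy) hka
    have hright : HasDerivWithinAt k 0 (Ici ℓss) ℓss := hGa0 ▸ hk_win
    have hu := hleft.union hright
    rwa [Iic_union_Ici, hasDerivWithinAt_univ] at hu
  have hkAll : ∀ t, ℓss ≤ t → HasDerivAt k (G t (k t)) t := by
    intro t ht
    rcases eq_or_lt_of_le ht with h | h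
    · subst h
      rw [hka, hGa0]
      exact hderivA
    · exact hk_gt t h
  have hkc : ContinuousOn k (Ici ℓss) := fun t ht =>
    (hkAll t ht).continuousAt.continuousWithinAt
  -- rough barriers
  have hlow : ∀ t, ℓss ≤ t → -1 ≤ k t := by
    apply JangAux.stay_above ℓss k (fun t => G t (k t)) hkc (fun t ht => hk_gt t ht)
    · intro t ht hle
      have he : G t (k t) = thetaPlus R KR t := by
        simp only [hG]; rw [JangAux.cl_of_le hle, hFm1]
      rw [he]; exact hθnn t ht
    · rw [hka]
  have hupp : ∀ t, ℓss ≤ t → k t ≤ 1 := by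
    rcases hsign with hsign | hsign
    · intro t ht
      have h := JangAux.stay_above ℓss (fun s => -k s) (fun s => -(G s (k s)))
        hkc.neg (fun s hs => (hk_gt s hs).neg)
        (fun s hs hle => by
          have hge : 1 ≤ k s := by
            linarith
          have he : G s (k s) = thetaMinus R KR s := by
            simp only [hG]; rw [JangAux.cl_of_ge hge, hF1]
          show (0:ℝ) ≤ -(G s (k s))
          rw [he]
          linarith [hsign s (hIci hs)])
        (by rw [hka]; norm_num)
        t ht
      linarith
    · intro t ht
      have h := JangAux.stay_neg ℓss k (fun s => G s (k s)) hkc hk_gt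
        (fun s hs h0 => by
          have he : G s (k s) = trKf Kl KR s := by
            simp only [hG]
            rw [h0, JangAux.cl_eq (by norm_num) (by norm_num)]
            simp only [hF]; ring
          show G s (k s) < 0
          rw [he]
          exact hsign s (hIci hs))
        (by rw [hka]; norm_num) t ht
      linarith
  -- the true (unclamped) ODE
  have hODE : ∀ t, ℓss ≤ t →
      HasDerivAt k (-(Kl t) * k t ^ 2 - Hf R t * k t + trKf Kl KR t) t := by
    intro t ht
    have h1 := hkAll t ht
    have h2 : G t (k t) = -(Kl t) * k t ^ 2 - Hf R t * k t + trKf Kl KR t := by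
      simp only [hG, hF]
      rw [JangAux.cl_eq (hlow t ht) (hupp t ht)]
    rwa [h2] at h1
  -- strict lower bound via the integrating-factor argument
  have hmaxc : Continuous (fun t : ℝ => max t ℓss) := continuous_id.max continuous_const
  have hmaxmem : ∀ t : ℝ, max t ℓss ∈ Ici ℓss := fun t => mem_Ici.mpr (le_max_right _ _)
  have hkcomp : Continuous (fun t => k (max t ℓss)) := hkc.comp_continuous hmaxc hmaxmem
  have hHcomp : Continuous (fun t => Hf R (max t ℓss)) :=
    (hHc.mono hIci).comp_continuous hmaxc hmaxmem
  have hKlcomp : Continuous (fun t => Kl (max t ℓss)) := hKl.continuous.comp hmaxc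
  have hklow : ∀ t, ℓss < t → -1 < k t := by
    have hq : Continuous
        (fun t => -(Kl (max t ℓss) * (k (max t ℓss) - 1) + Hf R (max t ℓss))) :=
      ((hKlcomp.mul (hkcomp.sub continuous_const)).add hHcomp).neg
    have hgron := JangAux.gronwall_pos ℓss (fun t => k t + 1) (thetaPlus R KR)
      (fun t => -(Kl (max t ℓss) * (k (max t ℓss) - 1) + Hf R (max t ℓss)))
      (hkc.add continuousOn_const) hq
      (fun t ht => by
        have hmx : max t ℓss = t := max_eq_left ht.le
        have h1 := (hODE t ht.le).add_const 1
        have h2 : -(Kl t) * k t ^ 2 - Hf R t * k t + trKf Kl KR t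
            = thetaPlus R KR t
              + -(Kl (max t ℓss) * (k (max t ℓss) - 1) + Hf R (max t ℓss)) * (k t + 1) := by
          rw [hmx]; simp only [thetaPlus, trKf]; ring
        rw [h2] at h1
        exact h1)
      (fun t ht => hθnn t ht.le)
      (by rw [hka]; norm_num)
    intro t ht
    have hc : ∃ c, ℓss < c ∧ c < t ∧ 0 < thetaPlus R KR c := by
      have h1 : ℓss < min t ℓs := lt_min ht hℓss
      refine ⟨(ℓss + min t ℓs) / 2, by linarith, ?_, ?_⟩
      · have := min_le_left t ℓs; linarith
      · apply hbetween
        constructor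
        · linarith
        · have := min_le_right t ℓs; linarith
    have h2 := hgron.2 t ht (Or.inr hc)
    linarith
  -- strict upper bound
  have hkupp : ∀ t, ℓss < t → k t < 1 := by
    rcases hsign with hsign | hsign
    · have hq : Continuous
          (fun t => -(Kl (max t ℓss) * (k (max t ℓss) + 1) + Hf R (max t ℓss))) :=
        ((hKlcomp.mul (hkcomp.add continuous_const)).add hHcomp).neg
      have hgron := JangAux.gronwall_pos ℓss (fun t => 1 - k t)
        (fun t => -(thetaMinus R KR t))
        (fun t => -(Kl (max t ℓss) * (k (max t ℓss) + 1) + Hf R (max t ℓss)))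
        (continuousOn_const.sub hkc) hq
        (fun t ht => by
          have hmx : max t ℓss = t := max_eq_left ht.le
          have h1 := (hODE t ht.le).const_sub 1
          have h2 : -(-(Kl t) * k t ^ 2 - Hf R t * k t + trKf Kl KR t)
              = -(thetaMinus R KR t)
                + -(Kl (max t ℓss) * (k (max t ℓss) + 1) + Hf R (max t ℓss)) * (1 - k t) := by
            rw [hmx]; simp only [thetaMinus, trKf]; ring
          rw [h2] at h1
          exact h1)
        (fun t ht => by
          show (0:ℝ) ≤ -(thetaMinus R KR t)
          linarith [hsign t (hIci ht.le)])
        (by rw [hka]; norm_num)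
      intro t ht
      have h2 := hgron.2 t ht (Or.inl (by rw [hka]; norm_num))
      linarith
    · intro t ht
      have h := JangAux.stay_neg ℓss k
        (fun s => -(Kl s) * k s ^ 2 - Hf R s * k s + trKf Kl KR s) hkc
        (fun s hs => hODE s hs.le)
        (fun s hs h0 => by
          show -(Kl s) * k s ^ 2 - Hf R s * k s + trKf Kl KR s < 0
          rw [h0]
          simpa using hsign s (hIci hs))
        (by rw [hka]; norm_num) t ht.le
      linarith
  -- smoothness
  have hsmoothn : ∀ n : ℕ, ContDiffOn ℝ n k (Ici ℓss) := by
    intro n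
    induction n with
    | zero => exact contDiffOn_zero.mpr hkc
    | succ n ih =>
      have hud : UniqueDiffOn ℝ (Ici ℓss) := uniqueDiffOn_Ici ℓss
      have hcast : ((n + 1 : ℕ) : WithTop ℕ∞) = (n : WithTop ℕ∞) + 1 := by push_cast; ring
      rw [hcast, contDiffOn_succ_iff_derivWithin hud]
      refine ⟨fun t ht => (hODE t ht).differentiableAt.differentiableWithinAt, ?_, ?_⟩
      · intro h
        exact absurd h (by simp)
      · have hn : (n : WithTop ℕ∞) ≤ ((⊤ : ℕ∞) : WithTop ℕ∞) := by
          exact_mod_cast (le_top : (n : ℕ∞) ≤ ⊤)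
        have hKln : ContDiffOn ℝ n Kl (Ici ℓss) := (hKl.of_le hn).contDiffOn
        have hKRn : ContDiffOn ℝ n KR (Ici ℓss) := (hKR.of_le hn).contDiffOn
        have hHfn : ContDiffOn ℝ n (Hf R) (Ici ℓss) := by
          show ContDiffOn ℝ n (fun ℓ => 2 * deriv R ℓ / R ℓ) (Ici ℓss)
          apply ContDiffOn.div
          · exact contDiffOn_const.mul (hRder.of_le hn).contDiffOn
          · exact (hR.of_le hn).contDiffOn
          · exact fun t ht => (hRpos t (hIci ht)).ne'
        have htrn : ContDiffOn ℝ n (fun t => trKf Kl KR t) (Ici ℓss) := by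
          simp only [trKf]
          exact hKln.add (contDiffOn_const.mul hKRn)
        have hrhs : ContDiffOn ℝ n
            (fun t => -(Kl t) * k t ^ 2 - Hf R t * k t + trKf Kl KR t) (Ici ℓss) :=
          ((hKln.neg.mul (ih.pow 2)).sub (hHfn.mul ih)).add htrn
        apply hrhs.congr
        intro t ht
        exact (hODE t ht).hasDerivWithinAt.derivWithin (hud t ht)
  have hsm : ContDiffOn ℝ (⊤ : ℕ∞) k (Ici ℓss) := contDiffOn_infty.mpr hsmoothn
  -- decay: k → 0 at infinity
  rw [isBigO_iff] at hO1 hO4 hO8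
  obtain ⟨c1, hc1⟩ := hO1
  obtain ⟨c4, hc4⟩ := hO4
  obtain ⟨c8, hc8⟩ := hO8
  rw [eventually_atTop] at hc1 hc4 hc8
  obtain ⟨L1, hL1⟩ := hc1
  obtain ⟨L4, hL4⟩ := hc4
  obtain ⟨L8, hL8⟩ := hc8
  set D : ℝ := 2 * (|c4| + |c8|) with hD
  have hD0 : 0 ≤ D := by positivity
  set L0 : ℝ := max (max L1 (max L4 L8)) (max (ℓss + 1) (max 1 (2 * |c1| + 1))) with hL0
  have hL0ss : ℓss ≤ L0 :=
    le_trans (by linarith : ℓss ≤ ℓss + 1) ((le_max_left _ _).trans (le_max_right _ _))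
  have hL01 : 1 ≤ L0 :=
    le_trans ((le_max_left _ _).trans (le_max_right _ _)) (le_max_right _ _)
  have hbounds : ∀ ℓ, L0 ≤ ℓ →
      (ℓ ^ 2 / 2 ≤ R ℓ ^ 2 ∧ R ℓ ^ 2 ≤ 2 * ℓ ^ 2 ∧
        |Kl ℓ| ≤ |c4| / ℓ ^ 2 ∧ |trKf Kl KR ℓ| ≤ |c8| / ℓ ^ 2) := by
    intro ℓ hℓ
    have hℓ1 : 1 ≤ ℓ := le_trans hL01 hℓ
    have hℓ0 : 0 < ℓ := by linarith
    have hℓ2 : (0:ℝ) < ℓ ^ 2 := by positivity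
    have hc1ℓ : 2 * |c1| + 1 ≤ ℓ :=
      le_trans (le_trans (le_max_right _ _) (le_max_right _ _)) (le_trans (le_max_right _ _) hℓ)
    have hR2 : |R ℓ ^ 2 / ℓ ^ 2 - 1| ≤ 1 / 2 := by
      have h1 := hL1 ℓ (le_trans (le_trans (le_max_left _ _) (le_max_left _ _)) hℓ)
      rw [Real.norm_eq_abs, Real.norm_eq_abs, abs_of_pos (by positivity : (0:ℝ) < ℓ⁻¹)] at h1
      have h3 : c1 * ℓ⁻¹ ≤ 1 / 2 := by
        rw [← div_eq_mul_inv, div_le_div_iff₀ hℓ0 (by norm_num : (0:ℝ) < 2)]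
        have := le_abs_self c1
        linarith
      linarith
    obtain ⟨ha2, hb2⟩ := abs_le.mp hR2
    have heq : R ℓ ^ 2 / ℓ ^ 2 * ℓ ^ 2 = R ℓ ^ 2 := div_mul_cancel₀ _ (ne_of_gt hℓ2)
    refine ⟨by nlinarith, by nlinarith, ?_, ?_⟩
    · have h1 := hL4 ℓ (le_trans (le_trans (le_max_left _ _) (le_max_right _ _))
        (le_trans (le_max_left _ _) hℓ))
      rw [Real.norm_eq_abs, Real.norm_eq_abs, abs_of_pos (by positivity : (0:ℝ) < (ℓ^2)⁻¹)] at h1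
      have h2 : c4 * (ℓ ^ 2)⁻¹ ≤ |c4| / ℓ ^ 2 := by
        rw [div_eq_mul_inv]
        exact mul_le_mul_of_nonneg_right (le_abs_self c4) (by positivity)
      linarith
    · have h1 := hL8 ℓ (le_trans (le_trans (le_max_right _ _) (le_max_right _ _))
        (le_trans (le_max_left _ _) hℓ))
      rw [Real.norm_eq_abs, Real.norm_eq_abs, abs_of_pos (by positivity : (0:ℝ) < (ℓ^3)⁻¹)] at h1
      have h2 : c8 * (ℓ ^ 3)⁻¹ ≤ |c8| / ℓ ^ 3 := by
        rw [div_eq_mul_inv]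
        exact mul_le_mul_of_nonneg_right (le_abs_self c8) (by positivity)
      have h3 : |c8| / ℓ ^ 3 ≤ |c8| / ℓ ^ 2 := by
        apply div_le_div_of_nonneg_left (abs_nonneg c8) hℓ2
        nlinarith
      linarith
  set m : ℝ → ℝ := fun ℓ => R ℓ ^ 2 * k ℓ with hm
  have hm' : ∀ ℓ, ℓss ≤ ℓ →
      HasDerivAt m (R ℓ ^ 2 * (-(Kl ℓ) * k ℓ ^ 2 + trKf Kl KR ℓ)) ℓ := by
    intro ℓ hℓ
    have hRne : R ℓ ≠ 0 := (hRpos ℓ (hIci hℓ)).ne'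
    have h1 := ((hRdiff ℓ).hasDerivAt.pow 2).mul (hODE ℓ hℓ)
    convert h1 using 1 <;> try rfl
    have hHf : Hf R ℓ = 2 * deriv R ℓ / R ℓ := rfl
    rw [hHf]
    field_simp
    simp only [Pi.pow_apply]
    ring
  set B : ℝ := |m L0| with hB
  have hmb : ∀ ℓ, L0 ≤ ℓ → |k ℓ| ≤ 2 * B / ℓ ^ 2 + 2 * D / ℓ := by
    intro ℓ hℓ
    have hℓ1 : 1 ≤ ℓ := le_trans hL01 hℓ
    have hℓ0 : 0 < ℓ := by linarith
    have hseg : ∀ x ∈ Icc L0 ℓ,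
        HasDerivWithinAt m (R x ^ 2 * (-(Kl x) * k x ^ 2 + trKf Kl KR x)) (Icc L0 ℓ) x :=
      fun x hx => (hm' x (le_trans hL0ss hx.1)).hasDerivWithinAt
    have hbound : ∀ x ∈ Ico L0 ℓ,
        ‖R x ^ 2 * (-(Kl x) * k x ^ 2 + trKf Kl KR x)‖ ≤ D := by
      intro x hx
      obtain ⟨hb1, hb2, hb3, hb4⟩ := hbounds x hx.1
      have hx1 : 1 ≤ x := le_trans hL01 hx.1
      have hx0 : 0 < x := by linarith
      have hkx : |k x| ≤ 1 :=
        abs_le.mpr ⟨hlow x (le_trans hL0ss hx.1), hupp x (le_trans hL0ss hx.1)⟩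
      rw [Real.norm_eq_abs, abs_mul, abs_of_nonneg (by positivity : (0:ℝ) ≤ R x ^ 2)]
      have h7 : |(-(Kl x) * k x ^ 2 + trKf Kl KR x)| ≤ |Kl x| + |trKf Kl KR x| := by
        calc |(-(Kl x) * k x ^ 2 + trKf Kl KR x)|
            ≤ |(-(Kl x)) * k x ^ 2| + |trKf Kl KR x| := abs_add_le _ _
          _ ≤ |Kl x| + |trKf Kl KR x| := by
              rw [abs_mul, abs_neg, abs_pow]
              have hsq : |k x| ^ 2 ≤ 1 := by nlinarith [abs_nonneg (k x)]
              have e1 : |Kl x| * |k x| ^ 2 ≤ |Kl x| :=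
                mul_le_of_le_one_right (abs_nonneg _) hsq
              linarith
      have h8 : |Kl x| + |trKf Kl KR x| ≤ (|c4| + |c8|) / x ^ 2 := by
        rw [add_div]; linarith
      calc R x ^ 2 * |(-(Kl x) * k x ^ 2 + trKf Kl KR x)|
          ≤ 2 * x ^ 2 * ((|c4| + |c8|) / x ^ 2) :=
            mul_le_mul hb2 (h7.trans h8) (abs_nonneg _) (by positivity)
        _ = D := by rw [hD]; field_simp
    have hMVT := norm_image_sub_le_of_norm_deriv_le_segment' hseg hbound ℓ
      (right_mem_Icc.mpr hℓ)
    rw [Real.norm_eq_abs] at hMVT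
    have hL00 : (0:ℝ) ≤ L0 := by linarith
    have hmℓ : |m ℓ| ≤ B + D * ℓ := by
      have h9 : |m ℓ| ≤ |m ℓ - m L0| + |m L0| := by
        calc |m ℓ| = |(m ℓ - m L0) + m L0| := by ring_nf
          _ ≤ |m ℓ - m L0| + |m L0| := abs_add_le _ _
      have h10 : D * (ℓ - L0) ≤ D * ℓ := by nlinarith
      rw [← hB] at h9
      linarith
    obtain ⟨hb1, -, -, -⟩ := hbounds ℓ hℓ
    have h11 : |k ℓ| * (ℓ ^ 2 / 2) ≤ |k ℓ| * R ℓ ^ 2 :=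
      mul_le_mul_of_nonneg_left hb1 (abs_nonneg _)
    have h12 : |k ℓ| * R ℓ ^ 2 = |m ℓ| := by
      simp only [hm]
      rw [abs_mul, abs_of_nonneg (by positivity : (0:ℝ) ≤ R ℓ ^ 2)]
      ring
    have h13 : |k ℓ| ≤ (B + D * ℓ) / (ℓ ^ 2 / 2) := by
      rw [le_div_iff₀ (by positivity)]
      rw [h12] at h11
      linarith
    have h14 : (B + D * ℓ) / (ℓ ^ 2 / 2) = 2 * B / ℓ ^ 2 + 2 * D / ℓ := by
      field_simp
    rw [h14] at h13
    exact h13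
  have htend : Tendsto k atTop (nhds 0) := by
    apply squeeze_zero_norm' (a := fun ℓ : ℝ => 2 * B / ℓ ^ 2 + 2 * D / ℓ)
    · filter_upwards [eventually_ge_atTop L0] with ℓ hℓ
      rw [Real.norm_eq_abs]
      exact hmb ℓ hℓ
    · have t1 : Tendsto (fun ℓ : ℝ => 2 * B / ℓ ^ 2) atTop (nhds 0) :=
        tendsto_const_nhds.div_atTop (tendsto_pow_atTop (by norm_num))
      have t2 : Tendsto (fun ℓ : ℝ => 2 * D / ℓ) atTop (nhds 0) :=
        tendsto_const_nhds.div_atTop tendsto_id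
      simpa using t1.add t2
  exact ⟨k, hsm, fun ℓ hℓ => hODE ℓ hℓ, hka, fun ℓ hℓ => abs_lt.mpr ⟨hklow ℓ hℓ, hkupp ℓ hℓ⟩, htend⟩
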